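/- Fix integers p ≥ 1, F ≥ 1 and a real λ > 0. Let S[1],…,S[F] be p×p Hermitian matrices with I ⪯ S[f] for all f, set K[f] := S[f]⁻¹, and let 𝒮 := gsupp(K[·]). Let Ŝ[1],…,Ŝ[F] be p×p Hermitian matrices with max_f max_{i,j} |S[f]_{i,j} - Ŝ[f]_{i,j}| ≤ λ/2. If K̂[·] ∈ 𝒞 minimizes J(X) := -A{X} + ⟨Ŝ[·],X[·]⟩ + λ‖X‖₁ over 𝒞, then the error Δ[·] := K̂[·] - K[·] satisfies the cone condition ‖Δ_{𝒮^c}‖₁ ≤ 3 ‖Δ_𝒮‖₁. (Inequality (21): the gLASSO estimation error tends to be sparse.) -/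

import Mathlib

open Matrix
open scoped ComplexOrder

/-- Squared Frobenius norm of a single complex matrix. -/
noncomputable def frobSq {p : ℕ} (M : Matrix (Fin p) (Fin p) ℂ) : ℝ :=
  ∑ i, ∑ j, ‖M i j‖ ^ 2

/-- The norm ‖X_{i,j}[·]‖ of the (i,j) entry group of a matrix sequence. -/
noncomputable def entryNorm {p F : ℕ} (X : Fin F → Matrix (Fin p) (Fin p) ℂ)
    (i j : Fin p) : ℝ :=
  Real.sqrt ((1 / (F : ℝ)) * ∑ f, ‖X f i j‖ ^ 2)

/-- The ℓ₁-norm ‖X‖₁ of a matrix sequence. -/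
noncomputable def l1Norm {p F : ℕ} (X : Fin F → Matrix (Fin p) (Fin p) ℂ) : ℝ :=
  ∑ i, ∑ j, entryNorm X i j

/-- The inner product ⟨A[·],B[·]⟩ (real part). -/
noncomputable def seqInner {p F : ℕ} (A B : Fin F → Matrix (Fin p) (Fin p) ℂ) : ℝ :=
  (1 / (F : ℝ)) * ∑ f, ((A f * B f).trace).re

/-- A{X} = (1/F) ∑_f log det X[f]. -/
noncomputable def Afun {p F : ℕ} (X : Fin F → Matrix (Fin p) (Fin p) ℂ) : ℝ :=
  (1 / (F : ℝ)) * ∑ f, Real.log (((X f).det).re)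

/-- The constraint set 𝒞: sequences of Hermitian matrices with 0 ≺ X[f] ⪯ I. -/
def memC {p F : ℕ} (X : Fin F → Matrix (Fin p) (Fin p) ℂ) : Prop :=
  ∀ f, (X f).IsHermitian ∧ (X f).PosDef ∧
    ((1 : Matrix (Fin p) (Fin p) ℂ) - X f).PosSemidef

/-- The gLASSO objective J(X) = -A{X} + ⟨Ŝ,X⟩ + λ‖X‖₁. -/
noncomputable def glassoObj {p F : ℕ} (Shat : Fin F → Matrix (Fin p) (Fin p) ℂ)
    (lam : ℝ) (X : Fin F → Matrix (Fin p) (Fin p) ℂ) : ℝ :=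
  - Afun X + seqInner Shat X + lam * l1Norm X

-- X_𝒮[·]: the sequence restricted to the index set 𝒮.
open Classical in
noncomputable def restrictSeq {p F : ℕ} (S : Set (Fin p × Fin p))
    (X : Fin F → Matrix (Fin p) (Fin p) ℂ) : Fin F → Matrix (Fin p) (Fin p) ℂ :=
  fun f => Matrix.of fun i j => if (i, j) ∈ S then X f i j else 0

/-- Generalized support of a matrix sequence. -/
def gsupp {p F : ℕ} (X : Fin F → Matrix (Fin p) (Fin p) ℂ) : Set (Fin p × Fin p) :=
  {ij | ∃ f, X f ij.1 ij.2 ≠ 0}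

section AuxMatrix
variable {n : Type*} [Fintype n] [DecidableEq n]

lemma trace_eq_sum_eig {A : Matrix n n ℂ} (hA : A.IsHermitian) :
    A.trace = ∑ i, (hA.eigenvalues i : ℂ) := by
  conv_lhs => rw [hA.spectral_theorem]
  rw [Unitary.conjStarAlgAut_apply, Matrix.trace_mul_cycle]
  have h : (star (hA.eigenvectorUnitary : Matrix n n ℂ)) * (hA.eigenvectorUnitary : Matrix n n ℂ) = 1 := by
    simp
  rw [h, one_mul, Matrix.trace_diagonal]
  rfl

lemma det_re_pos {M : Matrix n n ℂ} (hM : M.PosDef) : 0 < M.det.re :=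
  (Complex.lt_def.mp hM.det_pos).1

lemma det_coe {M : Matrix n n ℂ} (hM : M.PosDef) : (M.det.re : ℂ) = M.det := by
  have h := (Complex.lt_def.mp hM.det_pos).2
  exact Complex.ext rfl (by simpa using h)

lemma key1 {M : Matrix n n ℂ} (hM : M.PosDef) :
    Real.log (M.det.re) ≤ (M.trace).re - Fintype.card n := by
  have hdet := hM.1.det_eq_prod_eigenvalues
  have htr := trace_eq_sum_eig hM.1
  have h2 : M.det.re = ∏ i, hM.1.eigenvalues i := by rw [hdet]; norm_cast
  have h3 : M.trace.re = ∑ i, hM.1.eigenvalues i := by rw [htr]; norm_cast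
  rw [h2, h3]
  have hpos := hM.eigenvalues_pos
  rw [Real.log_prod (fun i _ => (hpos i).ne')]
  calc ∑ i, Real.log (hM.1.eigenvalues i)
      ≤ ∑ i, (hM.1.eigenvalues i - 1) :=
        Finset.sum_le_sum fun i _ => Real.log_le_sub_one_of_pos (hpos i)
    _ = (∑ i, hM.1.eigenvalues i) - Fintype.card n := by
        rw [Finset.sum_sub_distrib]; simp

lemma posDef_conj {A C : Matrix n n ℂ} (hA : A.PosDef) (hC : C.IsHermitian)
    (hCu : IsUnit C.det) : (C * A * C).PosDef := by
  have hps : (C * A * C).PosSemidef := by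
    have := hA.posSemidef.conjTranspose_mul_mul_same C
    rwa [hC.eq] at this
  refine PosDef.of_dotProduct_mulVec_pos hps.1 fun x hx => ?_
  have hinj : Function.Injective C.mulVec :=
    Matrix.mulVec_injective_iff_isUnit.mpr (Matrix.isUnit_iff_isUnit_det C |>.mpr hCu)
  have hx' : C *ᵥ x ≠ 0 := fun h => hx (hinj (by simpa using h))
  have := hA.dotProduct_mulVec_pos hx'
  have hrw : star x ⬝ᵥ (C * A * C) *ᵥ x = star (C *ᵥ x) ⬝ᵥ A *ᵥ (C *ᵥ x) := by
    conv_lhs => rw [show C * A * C = Cᴴ * A * C from by rw [hC.eq]]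
    simp only [star_mulVec, dotProduct_mulVec, vecMul_vecMul]
  rwa [hrw]

lemma key2 {S X : Matrix n n ℂ} (hS : S.PosDef) (hX : X.PosDef) :
    Real.log (X.det.re) + Real.log (S.det.re) ≤ ((S * X).trace).re - Fintype.card n := by
  open MatrixOrder in
  set C := CFC.sqrt S with hCdef
  have hCh : C.IsHermitian := by open MatrixOrder in exact (CFC.sqrt_nonneg S).posSemidef.1
  have hC2 : C * C = S := by open MatrixOrder in exact CFC.sqrt_mul_sqrt_self S hS.posSemidef.nonneg
  have hSu : IsUnit S.det := hS.isUnit.map detMonoidHom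
  have hCu : IsUnit C.det := by
    have : C.det * C.det = S.det := by rw [← Matrix.det_mul, hC2]
    exact isUnit_of_mul_isUnit_left (this ▸ hSu)
  have hM : (C * X * C).PosDef := posDef_conj hX hCh hCu
  have h1 := key1 hM
  have htr : (C * X * C).trace = (S * X).trace := by
    rw [Matrix.trace_mul_cycle, hC2]
  have hdet : (C * X * C).det.re = S.det.re * X.det.re := by
    have : (C * X * C).det = S.det * X.det := by
      rw [Matrix.det_mul, Matrix.det_mul]
      rw [← hC2, Matrix.det_mul]; ring
    rw [this, ← det_coe hS, ← det_coe hX, ← Complex.ofReal_mul]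
    simp
  rw [htr, hdet] at h1
  rwa [Real.log_mul (det_re_pos hS).ne' (det_re_pos hX).ne', add_comm] at h1

lemma key3 {S X : Matrix n n ℂ} (hS : S.PosDef) (hX : X.PosDef) :
    Real.log (X.det.re) - Real.log ((S⁻¹).det.re) ≤
      ((S * X).trace).re - ((S * S⁻¹).trace).re := by
  have hSu : IsUnit S.det := hS.isUnit.map detMonoidHom
  have hinv : S * S⁻¹ = 1 := Matrix.mul_nonsing_inv S hSu
  have htr1 : ((S * S⁻¹).trace).re = (Fintype.card n : ℝ) := by
    rw [hinv, Matrix.trace_one]; simp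
  have hdetinv : (S⁻¹).det.re = (S.det.re)⁻¹ := by
    rw [Matrix.det_nonsing_inv, ← det_coe hS]
    rw [Ring.inverse_eq_inv, ← Complex.ofReal_inv]
    simp
  rw [htr1, hdetinv, Real.log_inv, sub_neg_eq_add]
  exact key2 hS hX

lemma sInvPsd {S : Matrix n n ℂ} (hS : S.PosDef) (hlow : (S - 1).PosSemidef) :
    ((1 : Matrix n n ℂ) - S⁻¹).PosSemidef := by
  have hSu : IsUnit S.det := hS.isUnit.map detMonoidHom
  have hSinv : (S⁻¹).PosDef := hS.inv
  open MatrixOrder in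
  set C := CFC.sqrt S⁻¹ with hCdef
  have hCh : C.IsHermitian := by open MatrixOrder in exact (CFC.sqrt_nonneg S⁻¹).posSemidef.1
  have hC2 : C * C = S⁻¹ := by open MatrixOrder in exact CFC.sqrt_mul_sqrt_self S⁻¹ hSinv.posSemidef.nonneg
  have h1 : C * S⁻¹ = S⁻¹ * C := by rw [← hC2, ← mul_assoc]
  have hcomm : S * C = C * S := by
    have h2 := congrArg (fun M => S * M * S) h1
    simp only [← mul_assoc] at h2
    rw [mul_assoc (S * C), Matrix.nonsing_inv_mul S hSu, mul_one,
      Matrix.mul_nonsing_inv S hSu, one_mul] at h2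
    exact h2
  have heq : C * (S - 1) * C = 1 - S⁻¹ := by
    have e1 : C * (S - 1) * C = C * S * C - C * C := by noncomm_ring
    rw [e1, hC2, show C * S = S * C from hcomm.symm, mul_assoc, hC2,
      Matrix.mul_nonsing_inv S hSu]
  have := hlow.conjTranspose_mul_mul_same C
  rw [hCh.eq, heq] at this
  exact this

end AuxMatrix

section AuxVec

lemma vec_sqrt_eq {F : ℕ} (w : Fin F → ℂ) :
    Real.sqrt ((1 / (F : ℝ)) * ∑ f, ‖w f‖ ^ 2)
      = Real.sqrt (1 / (F : ℝ)) * ‖(WithLp.equiv 2 (Fin F → ℂ)).symm w‖ := by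
  rw [EuclideanSpace.norm_eq, ← Real.sqrt_mul (by positivity)]
  congr 2

lemma vec_triangle {F : ℕ} (u v : Fin F → ℂ) :
    Real.sqrt ((1 / (F : ℝ)) * ∑ f, ‖u f + v f‖ ^ 2)
      ≤ Real.sqrt ((1 / (F : ℝ)) * ∑ f, ‖u f‖ ^ 2)
        + Real.sqrt ((1 / (F : ℝ)) * ∑ f, ‖v f‖ ^ 2) := by
  rw [vec_sqrt_eq, vec_sqrt_eq, vec_sqrt_eq, ← mul_add]
  refine mul_le_mul_of_nonneg_left ?_ (Real.sqrt_nonneg _)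
  calc ‖(WithLp.equiv 2 (Fin F → ℂ)).symm fun f => u f + v f‖
      = ‖(WithLp.equiv 2 (Fin F → ℂ)).symm u + (WithLp.equiv 2 (Fin F → ℂ)).symm v‖ := by
        rfl
    _ ≤ _ := norm_add_le _ _

lemma vec_mean_abs {F : ℕ} (v : Fin F → ℂ) :
    (1 / (F : ℝ)) * ∑ f, ‖v f‖ ≤ Real.sqrt ((1 / (F : ℝ)) * ∑ f, ‖v f‖ ^ 2) := by
  rcases Nat.eq_zero_or_pos F with hF | hF
  · subst hF; simp
  apply Real.le_sqrt_of_sq_le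
  have hcs := Finset.sum_mul_sq_le_sq_mul_sq Finset.univ (fun _ : Fin F => (1 : ℝ))
    (fun f => ‖v f‖)
  simp only [one_mul, one_pow, Finset.sum_const, Finset.card_univ, Fintype.card_fin,
    nsmul_eq_mul, mul_one] at hcs
  have hF' : (0 : ℝ) < F := by exact_mod_cast hF
  rw [mul_pow, div_pow, one_pow]
  calc 1 / (F:ℝ)^2 * (∑ f, ‖v f‖)^2 ≤ 1 / (F:ℝ)^2 * ((F:ℝ) * ∑ f, ‖v f‖^2) := by
        refine mul_le_mul_of_nonneg_left hcs (by positivity)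
    _ = 1 / (F:ℝ) * ∑ f, ‖v f‖^2 := by field_simp

end AuxVec

section AuxSeq
variable {p F : ℕ}

lemma seqInner_sub_right (A X Y : Fin F → Matrix (Fin p) (Fin p) ℂ) :
    seqInner A (fun f => X f - Y f) = seqInner A X - seqInner A Y := by
  unfold seqInner
  rw [← mul_sub, ← Finset.sum_sub_distrib]
  congr 1
  refine Finset.sum_congr rfl fun f _ => ?_
  rw [mul_sub, Matrix.trace_sub, Complex.sub_re]

lemma seqInner_sub_left (A B X : Fin F → Matrix (Fin p) (Fin p) ℂ) :
    seqInner (fun f => A f - B f) X = seqInner A X - seqInner B X := by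
  unfold seqInner
  rw [← mul_sub, ← Finset.sum_sub_distrib]
  congr 1
  refine Finset.sum_congr rfl fun f _ => ?_
  rw [sub_mul, Matrix.trace_sub, Complex.sub_re]

lemma entryNorm_nonneg (X : Fin F → Matrix (Fin p) (Fin p) ℂ) (i j : Fin p) :
    0 ≤ entryNorm X i j := Real.sqrt_nonneg _

lemma seqInner_le_l1 (A B : Fin F → Matrix (Fin p) (Fin p) ℂ) (c : ℝ)
    (hc : 0 ≤ c) (hA : ∀ f i j, ‖A f i j‖ ≤ c) : seqInner A B ≤ c * l1Norm B := by
  have hexp : ∀ f, ((A f * B f).trace).re = ∑ i, ∑ j, (A f i j * B f j i).re := by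
    intro f
    rw [Matrix.trace]
    simp [Matrix.diag, Matrix.mul_apply, Complex.re_sum]
  calc seqInner A B = (1/(F:ℝ)) * ∑ f, ∑ i, ∑ j, (A f i j * B f j i).re := by
        unfold seqInner
        congr 1
        exact Finset.sum_congr rfl fun f _ => hexp f
    _ ≤ (1/(F:ℝ)) * ∑ f, ∑ i, ∑ j, c * ‖B f j i‖ := by
        refine mul_le_mul_of_nonneg_left ?_ (by positivity)
        refine Finset.sum_le_sum fun f _ => Finset.sum_le_sum fun i _ =>
          Finset.sum_le_sum fun j _ => ?_
        calc (A f i j * B f j i).re ≤ ‖A f i j * B f j i‖ := Complex.re_le_norm _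
          _ = ‖A f i j‖ * ‖B f j i‖ := by rw [norm_mul]
          _ ≤ c * ‖B f j i‖ := by
              exact mul_le_mul_of_nonneg_right (hA f i j) (norm_nonneg _)
    _ = c * ∑ i, ∑ j, ((1/(F:ℝ)) * ∑ f, ‖B f j i‖) := by
        simp only [Finset.mul_sum]
        rw [Finset.sum_comm]
        refine Finset.sum_congr rfl fun i _ => ?_
        rw [Finset.sum_comm]
        exact Finset.sum_congr rfl fun j _ => Finset.sum_congr rfl fun f _ => by ring
    _ ≤ c * ∑ i, ∑ j, entryNorm B j i := by
        refine mul_le_mul_of_nonneg_left ?_ hc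
        exact Finset.sum_le_sum fun i _ => Finset.sum_le_sum fun j _ =>
          vec_mean_abs (fun f => B f j i)
    _ = c * l1Norm B := by
        unfold l1Norm
        rw [Finset.sum_comm]

lemma entryNorm_restrict_mem {T : Set (Fin p × Fin p)} {X : Fin F → Matrix (Fin p) (Fin p) ℂ}
    {i j : Fin p} (h : (i, j) ∈ T) :
    entryNorm (restrictSeq T X) i j = entryNorm X i j := by
  unfold entryNorm
  congr 2
  refine Finset.sum_congr rfl fun f _ => ?_
  simp [restrictSeq, h]

lemma entryNorm_restrict_not {T : Set (Fin p × Fin p)} {X : Fin F → Matrix (Fin p) (Fin p) ℂ}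
    {i j : Fin p} (h : (i, j) ∉ T) :
    entryNorm (restrictSeq T X) i j = 0 := by
  unfold entryNorm
  have h0 : ∀ f : Fin F, ‖restrictSeq T X f i j‖ ^ 2 = (0:ℝ) := by
    intro f; simp [restrictSeq, h]
  rw [Finset.sum_congr rfl (fun f _ => h0 f)]
  simp

lemma l1_split (T : Set (Fin p × Fin p)) (X : Fin F → Matrix (Fin p) (Fin p) ℂ) :
    l1Norm X = l1Norm (restrictSeq T X) + l1Norm (restrictSeq Tᶜ X) := by
  classical
  have key : ∀ i j, entryNorm X i j
      = entryNorm (restrictSeq T X) i j + entryNorm (restrictSeq Tᶜ X) i j := by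
    intro i j
    by_cases h : (i, j) ∈ T
    · rw [entryNorm_restrict_mem h, entryNorm_restrict_not (by simpa using h), add_zero]
    · rw [entryNorm_restrict_not h, entryNorm_restrict_mem (Set.mem_compl h), zero_add]
  unfold l1Norm
  simp only [key, Finset.sum_add_distrib]

lemma entryNorm_congr (X Y : Fin F → Matrix (Fin p) (Fin p) ℂ) (i j : Fin p)
    (h : ∀ f, X f i j = Y f i j) : entryNorm X i j = entryNorm Y i j := by
  unfold entryNorm
  congr 1
  rw [mul_eq_mul_left_iff]
  left
  exact Finset.sum_congr rfl fun f _ => by rw [h f]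

lemma entryNorm_tri3 (K Khat D : Fin F → Matrix (Fin p) (Fin p) ℂ) (i j : Fin p)
    (h : ∀ f, K f i j = Khat f i j - D f i j) :
    entryNorm K i j ≤ entryNorm Khat i j + entryNorm D i j := by
  unfold entryNorm
  have := vec_triangle (fun f => Khat f i j) (fun f => -(D f i j))
  simpa [h, sub_eq_add_neg] using this

end AuxSeq

/-- inequality (21), the gLASSO estimation error satisfies the cone condition. -/
theorem stmt_7 (p F : ℕ) (hp : 1 ≤ p) (hF : 1 ≤ F) (lam : ℝ) (hlam : 0 < lam)
    (S : Fin F → Matrix (Fin p) (Fin p) ℂ)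
    (hSherm : ∀ f, (S f).IsHermitian)
    (hSlow : ∀ f, (S f - 1).PosSemidef)
    (K : Fin F → Matrix (Fin p) (Fin p) ℂ) (hK : ∀ f, K f = (S f)⁻¹)
    (𝒮 : Set (Fin p × Fin p)) (h𝒮 : 𝒮 = gsupp K)
    (Shat : Fin F → Matrix (Fin p) (Fin p) ℂ) (hShat : ∀ f, (Shat f).IsHermitian)
    (herr : ∀ f i j, ‖S f i j - Shat f i j‖ ≤ lam / 2)
    (Khat : Fin F → Matrix (Fin p) (Fin p) ℂ) (hKhatC : memC Khat)
    (hmin : ∀ X, memC X → glassoObj Shat lam Khat ≤ glassoObj Shat lam X) :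
    l1Norm (restrictSeq 𝒮ᶜ (fun f => Khat f - K f)) ≤
      3 * l1Norm (restrictSeq 𝒮 (fun f => Khat f - K f)) := by
  classical
  set Δ : Fin F → Matrix (Fin p) (Fin p) ℂ := fun f => Khat f - K f with hΔ
  have hSpd : ∀ f, (S f).PosDef := by
    intro f
    have h := (Matrix.PosDef.one (n := Fin p) (R := ℂ)).add_posSemidef (hSlow f)
    simpa using h
  have hKC : memC K := by
    intro f
    rw [hK f]
    exact ⟨(hSherm f).inv, (hSpd f).inv, sInvPsd (hSpd f) (hSlow f)⟩
  set a := l1Norm (restrictSeq 𝒮 Δ) with ha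
  set b := l1Norm (restrictSeq 𝒮ᶜ Δ) with hb
  have h1 := hmin K hKC
  unfold glassoObj at h1
  have h2 : Afun Khat - Afun K ≤ seqInner S Khat - seqInner S K := by
    unfold Afun seqInner
    rw [← mul_sub, ← mul_sub, ← Finset.sum_sub_distrib, ← Finset.sum_sub_distrib]
    refine mul_le_mul_of_nonneg_left (Finset.sum_le_sum fun f _ => ?_) (by positivity)
    rw [hK f]
    exact key3 (hSpd f) (hKhatC f).2.1
  have hbound : ∀ f i j, ‖(S f - Shat f) i j‖ ≤ lam / 2 := by
    intro f i j
    simpa [Matrix.sub_apply] using herr f i j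
  have h3 : seqInner (fun f => S f - Shat f) Δ ≤ (lam/2) * l1Norm Δ :=
    seqInner_le_l1 _ _ _ (by positivity) hbound
  have h3' : seqInner (fun f => S f - Shat f) Δ
      = (seqInner S Khat - seqInner S K) - (seqInner Shat Khat - seqInner Shat K) := by
    rw [seqInner_sub_left, hΔ, seqInner_sub_right, seqInner_sub_right]
  have hsplit : l1Norm Δ = a + b := l1_split 𝒮 Δ
  have hKoff : ∀ i j, ((i, j) : Fin p × Fin p) ∉ 𝒮 → ∀ f, K f i j = 0 := by
    intro i j hij f
    by_contra h
    exact hij (h𝒮 ▸ ⟨f, h⟩)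
  have hKb : l1Norm (restrictSeq 𝒮ᶜ Khat) = b := by
    rw [hb]
    unfold l1Norm
    refine Finset.sum_congr rfl fun i _ => Finset.sum_congr rfl fun j _ => ?_
    by_cases h : (i, j) ∈ 𝒮ᶜ
    · rw [entryNorm_restrict_mem h, entryNorm_restrict_mem h]
      refine entryNorm_congr _ _ _ _ fun f => ?_
      simp [hΔ, Matrix.sub_apply, hKoff i j (by simpa using h) f]
    · rw [entryNorm_restrict_not h, entryNorm_restrict_not h]
  have hKsupp : l1Norm (restrictSeq 𝒮 K) = l1Norm K := by
    have hz : l1Norm (restrictSeq 𝒮ᶜ K) = 0 := by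
      unfold l1Norm
      refine Finset.sum_eq_zero fun i _ => Finset.sum_eq_zero fun j _ => ?_
      by_cases h : (i, j) ∈ 𝒮ᶜ
      · rw [entryNorm_restrict_mem h]
        unfold entryNorm
        have h0 : ∀ f : Fin F, ‖K f i j‖ ^ 2 = (0:ℝ) := fun f => by
          simp [hKoff i j (by simpa using h) f]
        rw [Finset.sum_congr rfl fun f _ => h0 f]
        simp
      · exact entryNorm_restrict_not h
    conv_rhs => rw [l1_split 𝒮 K]
    rw [hz, add_zero]
  have hKhatSplit := l1_split 𝒮 Khat
  have htri : l1Norm (restrictSeq 𝒮 K) ≤ l1Norm (restrictSeq 𝒮 Khat) + a := by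
    rw [ha]
    unfold l1Norm
    rw [← Finset.sum_add_distrib]
    refine Finset.sum_le_sum fun i _ => ?_
    rw [← Finset.sum_add_distrib]
    refine Finset.sum_le_sum fun j _ => ?_
    by_cases h : (i, j) ∈ 𝒮
    · rw [entryNorm_restrict_mem h, entryNorm_restrict_mem h, entryNorm_restrict_mem h]
      refine entryNorm_tri3 K Khat Δ i j fun f => ?_
      simp [hΔ, Matrix.sub_apply]
    · rw [entryNorm_restrict_not h, entryNorm_restrict_not h, entryNorm_restrict_not h]
      norm_num
  have h4 : l1Norm K - l1Norm Khat ≤ a - b := by linarith [hKb, hKsupp, hKhatSplit, htri]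
  have hstep : lam * (l1Norm Khat - l1Norm K) ≤ (lam/2) * (a + b) := by
    calc lam * (l1Norm Khat - l1Norm K)
        ≤ (Afun Khat - Afun K) - (seqInner Shat Khat - seqInner Shat K) := by
          nlinarith [h1]
      _ ≤ (seqInner S Khat - seqInner S K) - (seqInner Shat Khat - seqInner Shat K) := by
          linarith [h2]
      _ = seqInner (fun f => S f - Shat f) Δ := h3'.symm
      _ ≤ (lam/2) * l1Norm Δ := h3
      _ = (lam/2) * (a + b) := by rw [hsplit]
  nlinarith [hstep, mul_le_mul_of_nonneg_left h4 hlam.le, hlam]
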